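/- arXiv:2010.16182 — 2 statements merged into one kernel-verified Lean document; each statement's English description precedes it below -/
import Mathlib

section
/- For compact intervals A, B, C, D, the norm of (A ⊖_gH B) ⊖_gH (C ⊖_gH D) is at most ‖A ⊖_gH C‖ + ‖B ⊖_gH D‖. -/
/-- gH-difference of compact intervals represented as pairs of endpoints. -/
def gHdiff (A B : ℝ × ℝ) : ℝ × ℝ :=
  (min (A.1 - B.1) (A.2 - B.2), max (A.1 - B.1) (A.2 - B.2))

/-- Norm of an interval `[p, q]` : `max |p| |q|`. -/
def ivNorm (A : ℝ × ℝ) : ℝ := max |A.1| |A.2|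


lemma max_abs_minmax (x y : ℝ) : max |min x y| |max x y| = max |x| |y| := by
  rcases le_total x y with h | h
  · rw [min_eq_left h, max_eq_right h, max_comm]
  · rw [min_eq_right h, max_eq_left h, max_comm]

theorem gHdiff_norm_triangle (A B C D : ℝ × ℝ)
    (hA : A.1 ≤ A.2) (hB : B.1 ≤ B.2) (hC : C.1 ≤ C.2) (hD : D.1 ≤ D.2) :
    ivNorm (gHdiff (gHdiff A B) (gHdiff C D)) ≤ ivNorm (gHdiff A C) + ivNorm (gHdiff B D) := by
  simp only [ivNorm, gHdiff]
  set u := A.1 - B.1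
  set v := A.2 - B.2
  set u' := C.1 - D.1
  set v' := C.2 - D.2
  rw [max_abs_minmax, max_abs_minmax, max_abs_minmax]
  have key : max |u - u'| |v - v'| ≤ max |A.1 - C.1| |A.2 - C.2| + max |B.1 - D.1| |B.2 - D.2| := by
    apply max_le
    · calc |u - u'| = |(A.1 - C.1) - (B.1 - D.1)| := by simp only [u, u']; ring_nf
        _ ≤ |A.1 - C.1| + |B.1 - D.1| := abs_sub _ _
        _ ≤ _ := add_le_add (le_max_left _ _) (le_max_left _ _)
    · calc |v - v'| = |(A.2 - C.2) - (B.2 - D.2)| := by simp only [v, v']; ring_nf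
        _ ≤ |A.2 - C.2| + |B.2 - D.2| := abs_sub _ _
        _ ≤ _ := add_le_add (le_max_right _ _) (le_max_right _ _)
  apply max_le
  · calc |min u v - min u' v'| ≤ max |u - u'| |v - v'| := abs_min_sub_min_le_max _ _ _ _
      _ ≤ _ := key
  · calc |max u v - max u' v'| ≤ max |u - u'| |v - v'| := abs_max_sub_max_le_max _ _ _ _
      _ ≤ _ := key
end

section
/- The interval-valued function F(x) = |x| ⊙ [-3, 2] on ℝ, i.e., F(x) = [-3|x|, 2|x|], satisfies F(λx) = λ ⊙ F(x) for all λ ≥ 0 and ¬(F(x) ⊕ F(y) ≺ F(x+y)) for all x, y (sublinearity), but F is not a convex IVF, since the lower endpoint x ↦ -3|x| is not a convex function on ℝ. -/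
/-- `sdom X Y` : `Y` is strictly dominated by `X` (written `X ≺ Y`). -/
def sdom (X Y : ℝ × ℝ) : Prop :=
  (X.1 ≤ Y.1 ∧ X.2 < Y.2) ∨ (X.1 < Y.1 ∧ X.2 ≤ Y.2)

/-- Componentwise addition of intervals. -/
def ivAdd (A B : ℝ × ℝ) : ℝ × ℝ := (A.1 + B.1, A.2 + B.2)

theorem sublinear_not_convex_example :
    (∀ l : ℝ, 0 ≤ l → ∀ x : ℝ,
        ((-3) * |l * x|, 2 * |l * x|) = (l * ((-3) * |x|), l * (2 * |x|))) ∧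
    (∀ x y : ℝ,
        ¬ sdom (ivAdd ((-3) * |x|, 2 * |x|) ((-3) * |y|, 2 * |y|))
               ((-3) * |x + y|, 2 * |x + y|)) ∧
    ¬ ConvexOn ℝ Set.univ (fun x : ℝ => (-3) * |x|) := by
  refine ⟨?_, ?_, ?_⟩
  · intro l hl x
    rw [abs_mul, abs_of_nonneg hl]
    rw [Prod.mk.injEq]
    constructor <;> ring
  · intro x y h
    have htri : |x + y| ≤ |x| + |y| := abs_add_le x y
    rcases h with ⟨h1, h2⟩ | ⟨h1, h2⟩ <;> simp only [ivAdd] at h1 h2 <;> nlinarith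
  · intro h
    have := h.2 (Set.mem_univ (-1 : ℝ)) (Set.mem_univ (1 : ℝ))
      (by norm_num : (0:ℝ) ≤ 1/2) (by norm_num : (0:ℝ) ≤ 1/2) (by norm_num)
    simp at this
    norm_num at this
end
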